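/- arXiv:2003.05130 — 3 statements merged into one kernel-verified Lean document; each statement's English description precedes it below -/
import Mathlib

section
/- Let λ₁,…,λ_n > 0 and P > 0. The allocation p_i = max(0, μ/√λ_i − 1/λ_i), with μ > 0 chosen so that Σ_i p_i = P, minimizes Σ_i 1/(1 + p_i λ_i) over all p with p_i ≥ 0 and Σ_i p_i ≤ P. -/
lemma wf_key (l μ a b : ℝ) (hl : 0 < l) (hμ : 0 < μ)
    (ha : a = max 0 (μ / Real.sqrt l - 1 / l)) (hb : 0 ≤ b) :
    1 / (1 + a * l) - 1 / (1 + b * l) ≤ (b - a) / μ ^ 2 := by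
  set s := Real.sqrt l with hsdef
  have hs : 0 < s := Real.sqrt_pos.mpr hl
  have hs2 : s * s = l := Real.mul_self_sqrt hl.le
  have ha0 : 0 ≤ a := by rw [ha]; exact le_max_left _ _
  have hA : 0 < 1 + a * l := by nlinarith
  have hB : 0 < 1 + b * l := by nlinarith
  rw [div_sub_div _ _ hA.ne' hB.ne', div_le_div_iff₀ (by positivity) (by positivity)]
  rcases le_or_gt (μ / s - 1 / l) 0 with h | h
  · have haz : a = 0 := by rw [ha]; exact max_eq_left h
    have hml : μ * l ≤ 1 * s := by
      have := (div_le_div_iff₀ hs hl).mp (by linarith : μ / s ≤ 1 / l)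
      linarith
    have hμl : μ ^ 2 * l ≤ 1 := by
      nlinarith [mul_le_mul hml hml (mul_nonneg hμ.le hl.le) (by linarith : (0:ℝ) ≤ 1 * s)]
    subst haz
    nlinarith [mul_nonneg hb hl.le]
  · have haa : a = μ / s - 1 / l := by rw [ha]; exact max_eq_right h.le
    have h1 : 1 + a * l = μ * s := by
      rw [haa]; field_simp; linear_combination (-μ) * hs2
    have h2 : (1 + a * l) ^ 2 = μ ^ 2 * l := by
      rw [h1]; linear_combination μ ^ 2 * hs2
    have hkey : (b - a) * ((1 + a * l) * (1 + b * l)) -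
        ((1 + b * l) - (1 + a * l)) * μ ^ 2 = (b - a) ^ 2 * (1 + a * l) * l := by
      linear_combination (b - a) * h2
    nlinarith [hkey, mul_nonneg (mul_nonneg (sq_nonneg (b - a)) hA.le) hl.le]

theorem stmt_8 {n : ℕ} (lam : Fin n → ℝ) (hlam : ∀ i, 0 < lam i)
    (P μ : ℝ) (hP : 0 < P) (hμ : 0 < μ)
    (pstar : Fin n → ℝ) (hps : ∀ i, pstar i = max 0 (μ / Real.sqrt (lam i) - 1 / lam i))
    (hsum : ∑ i, pstar i = P) :
    ∀ p : Fin n → ℝ, (∀ i, 0 ≤ p i) → (∑ i, p i) ≤ P →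
      ∑ i, 1 / (1 + pstar i * lam i) ≤ ∑ i, 1 / (1 + p i * lam i) := by
  intro p hp hpsum
  have key : ∀ i ∈ Finset.univ, 1 / (1 + pstar i * lam i) - 1 / (1 + p i * lam i)
      ≤ (p i - pstar i) / μ ^ 2 :=
    fun i _ => wf_key (lam i) μ (pstar i) (p i) (hlam i) hμ (hps i) (hp i)
  have h1 := Finset.sum_le_sum key
  rw [Finset.sum_sub_distrib, ← Finset.sum_div, Finset.sum_sub_distrib, hsum] at h1
  have h2 : (∑ i, p i - P) / μ ^ 2 ≤ 0 :=
    div_nonpos_of_nonpos_of_nonneg (by linarith) (by positivity)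
  linarith
end

section
/- For a fixed positive diagonal Λ = diag(λ₁,…,λ_n) with entries in descending order, unitary U ∈ ℂ^{n×n}, H_s = U Λ U†, and power budget P > 0, the maximum of log det(I + F† H_s F) over all F ∈ ℂ^{n×n} with tr(F F†) ≤ P is attained by F = U Σ with Σ diagonal, i.e., the optimal input covariance F F† commutes with H_s (is diagonalized by U). -/
open Matrix ComplexOrder

lemma psd_diag_nonneg {m : Type*} [Fintype m] [DecidableEq m] {M : Matrix m m ℂ}
    (h : M.PosSemidef) (i : m) : 0 ≤ M i i := by
  exact h.diag_nonneg

lemma hadamard_ineq : ∀ (n : ℕ) (A : Matrix (Fin n) (Fin n) ℂ), A.PosSemidef →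
    (1 + A).det.re ≤ ∏ i, (1 + (A i i).re) := by
  intro n
  induction n with
  | zero => intro A _; simp [Matrix.det_fin_zero]
  | succ n ih =>
    intro A hA
    set e : Fin n ⊕ Fin 1 ≃ Fin (n + 1) := finSumFinEquiv with he
    set B := A.submatrix e e with hB
    have hBpsd : B.PosSemidef := hA.submatrix e
    set A₁ := B.toBlocks₁₁ with hA₁
    set C := B.toBlocks₁₂ with hCdef
    set Dd := B.toBlocks₂₂ with hDd
    have hA₁psd : A₁.PosSemidef := hA.submatrix (fun i => e (Sum.inl i))
    have hC : B.toBlocks₂₁ = Cᴴ := by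
      ext i j
      have h2 := congrFun (congrFun hBpsd.isHermitian (Sum.inr i)) (Sum.inl j)
      simpa [hCdef, Matrix.toBlocks₂₁, Matrix.toBlocks₁₂, Matrix.conjTranspose_apply] using h2.symm
    have hW : (1 + A₁).PosDef := Matrix.PosDef.one.add_posSemidef hA₁psd
    haveI : Invertible (1 + A₁) := hW.isUnit.invertible
    have h1B : (1 : Matrix (Fin n ⊕ Fin 1) (Fin n ⊕ Fin 1) ℂ) + B
        = Matrix.fromBlocks (1 + A₁) C Cᴴ (1 + Dd) := by
      conv_lhs => rw [← Matrix.fromBlocks_toBlocks B, ← Matrix.fromBlocks_one]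
      rw [Matrix.fromBlocks_add, hC]
      simp [hA₁, hCdef, hDd]
    have hdet : (1 + A).det = (1 + A₁).det * ((1 + Dd) - Cᴴ * (1 + A₁)⁻¹ * C).det := by
      have : (1 + A).det = ((1 + A).submatrix e e).det :=
        (Matrix.det_submatrix_equiv_self e (1 + A)).symm
      rw [this]
      have hsub : (1 + A).submatrix e e = 1 + B := by
        ext i j
        simp [Matrix.submatrix_apply, Matrix.one_apply, e.injective.eq_iff]
        rfl
      rw [hsub, h1B, Matrix.det_fromBlocks₁₁, Matrix.invOf_eq_nonsing_inv]
    -- positivity facts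
    have hdW : 0 < (1 + A₁).det := hW.det_pos
    obtain ⟨hdWre, hdWim0⟩ := Complex.lt_def.mp hdW
    have hdWim : (1 + A₁).det.im = 0 := by simpa using hdWim0.symm
    have hTpsd : (Cᴴ * (1 + A₁)⁻¹ * C).PosSemidef :=
      (hW.inv.posSemidef).conjTranspose_mul_mul_same C
    have hT := psd_diag_nonneg hTpsd 0
    obtain ⟨hTre, hTim0⟩ := Complex.le_def.mp hT
    have hTim : ((Cᴴ * (1 + A₁)⁻¹ * C) 0 0).im = 0 := by simpa using hTim0.symm
    have hTre' : 0 ≤ ((Cᴴ * (1 + A₁)⁻¹ * C) 0 0).re := by simpa using hTre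
    have hDdnn := psd_diag_nonneg hBpsd (Sum.inr 0)
    obtain ⟨hDre, hDim0⟩ := Complex.le_def.mp hDdnn
    have hDim : (Dd 0 0).im = 0 := by simpa [hDd, Matrix.toBlocks₂₂] using hDim0.symm
    have hDre' : 0 ≤ (Dd 0 0).re := by simpa [hDd, Matrix.toBlocks₂₂] using hDre
    have hzdet : ((1 + Dd) - Cᴴ * (1 + A₁)⁻¹ * C).det
        = 1 + Dd 0 0 - (Cᴴ * (1 + A₁)⁻¹ * C) 0 0 := by
      rw [Matrix.det_fin_one]
      simp [Matrix.sub_apply, Matrix.add_apply]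
    have hBDd : Dd 0 0 = B (Sum.inr 0) (Sum.inr 0) := rfl
    -- real part computation
    have hre : (1 + A).det.re
        = (1 + A₁).det.re * (1 + (Dd 0 0).re - ((Cᴴ * (1 + A₁)⁻¹ * C) 0 0).re) := by
      rw [hdet, hzdet]
      simp [Complex.mul_re, hdWim, Complex.sub_re, Complex.add_re]
    -- product split
    have hprod : (∏ i, (1 + (A i i).re))
        = (∏ i : Fin n, (1 + (A₁ i i).re)) * (1 + (Dd 0 0).re) := by
      rw [← Equiv.prod_comp e (fun i => 1 + (A i i).re), Fintype.prod_sum_type]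
      simp [hA₁, hDd, Matrix.toBlocks₁₁, Matrix.toBlocks₂₂, hB]
    have hih := ih A₁ hA₁psd
    have hp0 : 0 < ∏ i : Fin n, (1 + (A₁ i i).re) := lt_of_lt_of_le hdWre hih
    rw [hre, hprod]
    calc (1 + A₁).det.re * (1 + (Dd 0 0).re - ((Cᴴ * (1 + A₁)⁻¹ * C) 0 0).re)
        ≤ (1 + A₁).det.re * (1 + (Dd 0 0).re) := by
          apply mul_le_mul_of_nonneg_left _ (by simpa using hdWre.le)
          linarith [hTre']
      _ ≤ (∏ i : Fin n, (1 + (A₁ i i).re)) * (1 + (Dd 0 0).re) := by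
          apply mul_le_mul_of_nonneg_right hih
          linarith [hDre']

theorem stmt_9 {n : ℕ} (lam : Fin n → ℝ) (hlam : ∀ i, 0 < lam i)
    (hdesc : ∀ i j : Fin n, i ≤ j → lam j ≤ lam i)
    (U : Matrix (Fin n) (Fin n) ℂ) (hU : U ∈ Matrix.unitaryGroup (Fin n) ℂ)
    (Hs : Matrix (Fin n) (Fin n) ℂ)
    (hHs : Hs = U * Matrix.diagonal (fun i => (lam i : ℂ)) * Uᴴ)
    (P : ℝ) (hP : 0 < P) :
    ∃ s : Fin n → ℝ,
      ((U * Matrix.diagonal (fun i => (s i : ℂ))) *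
          (U * Matrix.diagonal (fun i => (s i : ℂ)))ᴴ).trace.re ≤ P ∧
      ∀ F : Matrix (Fin n) (Fin n) ℂ, (F * Fᴴ).trace.re ≤ P →
        Real.log ((1 + Fᴴ * Hs * F).det.re) ≤
          Real.log ((1 + (U * Matrix.diagonal (fun i => (s i : ℂ)))ᴴ * Hs *
            (U * Matrix.diagonal (fun i => (s i : ℂ)))).det.re) := by
  classical
  have hUU : Uᴴ * U = 1 := by
    simpa [Matrix.star_eq_conjTranspose] using hU.1
  have hUU' : U * Uᴴ = 1 := by
    simpa [Matrix.star_eq_conjTranspose] using hU.2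
  -- the objective over diagonal powers
  set f : (Fin n → ℝ) → ℝ := fun x => ∏ i, (1 + lam i * x i ^ 2) with hf
  set K : Set (Fin n → ℝ) := {x | ∑ i, x i ^ 2 ≤ P} with hKdef
  have hKc : IsCompact K := by
    apply Metric.isCompact_of_isClosed_isBounded
    · exact isClosed_le (by continuity) continuous_const
    · apply (Metric.isBounded_closedBall (x := (0 : Fin n → ℝ)) (r := Real.sqrt P)).subset
      intro x hx
      rw [Metric.mem_closedBall, dist_pi_le_iff (Real.sqrt_nonneg P)]
      intro i
      rw [Real.dist_eq, Pi.zero_apply, sub_zero]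
      have h1 : x i ^ 2 ≤ P := by
        refine le_trans ?_ hx
        exact Finset.single_le_sum (f := fun j => x j ^ 2)
          (fun j _ => sq_nonneg (x j)) (Finset.mem_univ i)
      calc |x i| = Real.sqrt (x i ^ 2) := (Real.sqrt_sq_eq_abs (x i)).symm
        _ ≤ Real.sqrt P := Real.sqrt_le_sqrt h1
  have hKne : K.Nonempty := ⟨0, by simp [hKdef, hP.le]⟩
  have hfc : ContinuousOn f K := Continuous.continuousOn (by continuity)
  obtain ⟨s, hsK, hsmax⟩ := hKc.exists_isMaxOn hKne hfc
  -- compute (U Σ)ᴴ Hs (U Σ)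
  have hUU2 : ∀ M : Matrix (Fin n) (Fin n) ℂ, Uᴴ * (U * M) = M := fun M => by
    rw [← Matrix.mul_assoc, hUU, Matrix.one_mul]
  have hform : ∀ t : Fin n → ℝ,
      (U * Matrix.diagonal (fun i => (t i : ℂ)))ᴴ * Hs *
          (U * Matrix.diagonal (fun i => (t i : ℂ)))
        = Matrix.diagonal (fun i => ((lam i * t i ^ 2 : ℝ) : ℂ)) := by
    intro t
    rw [hHs, Matrix.conjTranspose_mul, Matrix.diagonal_conjTranspose]
    have hst : star (fun i => (t i : ℂ)) = fun i => (t i : ℂ) := by funext i; simp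
    rw [hst]
    simp only [Matrix.mul_assoc, hUU2, Matrix.diagonal_mul_diagonal]
    apply congrArg
    funext i; push_cast; ring
  have hdetform : ∀ t : Fin n → ℝ,
      (1 + (U * Matrix.diagonal (fun i => (t i : ℂ)))ᴴ * Hs *
          (U * Matrix.diagonal (fun i => (t i : ℂ)))).det.re = f t := by
    intro t
    have h4 : (1 : Matrix (Fin n) (Fin n) ℂ)
        + Matrix.diagonal (fun i => ((lam i * t i ^ 2 : ℝ) : ℂ))
        = Matrix.diagonal (fun i => ((1 + lam i * t i ^ 2 : ℝ) : ℂ)) := by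
      rw [← Matrix.diagonal_one, Matrix.diagonal_add]
      apply congrArg; funext i; push_cast; ring
    rw [hform t, h4, Matrix.det_diagonal, ← Complex.ofReal_prod, Complex.ofReal_re, hf]
  have htr : ∀ t : Fin n → ℝ,
      ((U * Matrix.diagonal (fun i => (t i : ℂ))) *
          (U * Matrix.diagonal (fun i => (t i : ℂ)))ᴴ).trace
        = ((∑ i, t i ^ 2 : ℝ) : ℂ) := by
    intro t
    rw [Matrix.conjTranspose_mul, Matrix.diagonal_conjTranspose, Matrix.trace_mul_comm]
    have hst : star (fun i => (t i : ℂ)) = fun i => (t i : ℂ) := by funext i; simp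
    rw [hst, Matrix.mul_assoc, hUU2, Matrix.diagonal_mul_diagonal, Matrix.trace_diagonal]
    push_cast; congr 1; funext i; ring
  refine ⟨s, ?_, ?_⟩
  · rw [htr s, Complex.ofReal_re]
    exact hsK
  · intro F hF
    set G := Uᴴ * F with hG
    set q : Fin n → ℝ := fun i => ∑ k, Complex.normSq (G i k) with hq
    have hqnn : ∀ i, 0 ≤ q i := fun i => Finset.sum_nonneg fun k _ => Complex.normSq_nonneg _
    have hGFtr : (G * Gᴴ).trace = (F * Fᴴ).trace := by
      rw [hG, Matrix.conjTranspose_mul, Matrix.conjTranspose_conjTranspose,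
        Matrix.trace_mul_comm, Matrix.mul_assoc, ← Matrix.mul_assoc U Uᴴ F, hUU',
        Matrix.one_mul, Matrix.trace_mul_comm]
    have h1 : (G * Gᴴ).trace = ((∑ i, q i : ℝ) : ℂ) := by
      have hmc : ∀ z : ℂ, z * star z = ((Complex.normSq z : ℝ) : ℂ) := fun z =>
        Complex.mul_conj z
      rw [Matrix.trace]
      simp only [Matrix.diag_apply, Matrix.mul_apply, Matrix.conjTranspose_apply, hmc, hq]
      push_cast
      rfl
    have hqtr : ∑ i, q i ≤ P := by
      have h2 : (G * Gᴴ).trace.re = ∑ i, q i := by rw [h1, Complex.ofReal_re]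
      rw [← h2, hGFtr]; exact hF
    set D := Matrix.diagonal (fun i => (Real.sqrt (lam i) : ℂ)) with hD
    have hDD : D * D = Matrix.diagonal (fun i => (lam i : ℂ)) := by
      rw [hD, Matrix.diagonal_mul_diagonal]
      apply congrArg; funext i
      rw [← Complex.ofReal_mul, Real.mul_self_sqrt (hlam i).le]
    have hDH : Dᴴ = D := by
      rw [hD, Matrix.diagonal_conjTranspose]
      apply congrArg; funext i
      exact Complex.conj_ofReal _
    have hmat : Fᴴ * Hs * F = (Gᴴ * D) * (D * G) := by
      rw [hHs, ← hDD, hG, Matrix.conjTranspose_mul, Matrix.conjTranspose_conjTranspose]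
      simp only [Matrix.mul_assoc]
    set N := D * G with hN
    have hNH : Nᴴ = Gᴴ * D := by rw [hN, Matrix.conjTranspose_mul, hDH]
    have hNNpsd : (N * Nᴴ).PosSemidef := Matrix.posSemidef_self_mul_conjTranspose N
    have hdet1 : (1 + Fᴴ * Hs * F).det = (1 + N * Nᴴ).det := by
      have e1 : Fᴴ * Hs * F = Nᴴ * N := by rw [hmat, ← hNH]
      rw [e1]
      exact Matrix.det_one_add_mul_comm Nᴴ N
    have hpos : (0 : ℝ) < (1 + Fᴴ * Hs * F).det.re := by
      have hpd : ((1 : Matrix (Fin n) (Fin n) ℂ) + N * Nᴴ).PosDef :=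
        Matrix.PosDef.one.add_posSemidef hNNpsd
      have h2 := hpd.det_pos
      rw [hdet1]
      have := (Complex.lt_def.mp h2).1
      simpa using this
    have hdiagN : ∀ i, ((N * Nᴴ) i i).re = lam i * q i := by
      intro i
      have hNik : ∀ k, N i k = (Real.sqrt (lam i) : ℂ) * G i k := by
        intro k
        rw [hN, hD]
        simp [Matrix.mul_apply, Matrix.diagonal_apply, ite_mul]
      have hmc : ∀ z : ℂ, z * star z = ((Complex.normSq z : ℝ) : ℂ) := fun z =>
        Complex.mul_conj z
      simp only [Matrix.mul_apply, Matrix.conjTranspose_apply, hNik, hmc]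
      simp only [Complex.normSq_mul, Complex.normSq_ofReal, Real.mul_self_sqrt (hlam i).le]
      rw [← Complex.ofReal_sum, Complex.ofReal_re, ← Finset.mul_sum]
    have hx : (fun i => Real.sqrt (q i)) ∈ K := by
      simp only [hKdef, Set.mem_setOf_eq]
      calc ∑ i, Real.sqrt (q i) ^ 2 = ∑ i, q i :=
            Finset.sum_congr rfl fun i _ => Real.sq_sqrt (hqnn i)
        _ ≤ P := hqtr
    have hchain : (1 + Fᴴ * Hs * F).det.re ≤ f s := by
      calc (1 + Fᴴ * Hs * F).det.re = (1 + N * Nᴴ).det.re := by rw [hdet1]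
        _ ≤ ∏ i, (1 + ((N * Nᴴ) i i).re) := hadamard_ineq n (N * Nᴴ) hNNpsd
        _ = f (fun i => Real.sqrt (q i)) := by
            rw [hf]
            refine Finset.prod_congr rfl fun i _ => ?_
            rw [hdiagN i, Real.sq_sqrt (hqnn i)]
        _ ≤ f s := hsmax hx
    rw [hdetform s]
    exact Real.log_le_log hpos hchain
end

section
/- The solution of the scalar relay water-filling: for θ, λ > 0, c > 0, and Lagrange multiplier μ > 0, the maximizer over ξ ≥ 0 of log((θ²ξλ + θ²ξ + 1)/(θ²ξ + 1)) − μ⁻¹ c ξ ... equivalently, the KKT stationary point of max Σᵢ log((θᵢ²ξᵢλᵢ + θᵢ²ξᵢ + 1)/(θᵢ²ξᵢ + 1)) subject to Σᵢ cᵢ ξᵢ ≤ P, ξᵢ ≥ 0 with cᵢ = λᵢ + 1 + ακ, is given by ξᵢ = (1/(2θᵢ²(λᵢ+1))) · max(0, √(λᵢ² + 4λᵢθᵢ²(λᵢ+1)μ/cᵢ) − λᵢ − 2). -/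
theorem stmt_14 (θ lam α κ μ : ℝ) (hθ : 0 < θ) (hlam : 0 < lam)
    (hα : 0 ≤ α) (hκ : 0 ≤ κ) (hμ : 0 < μ)
    (c : ℝ) (hc : c = lam + 1 + α * κ)
    (ξ : ℝ)
    (hξdef : ξ = 1 / (2 * θ ^ 2 * (lam + 1)) *
      max 0 (Real.sqrt (lam ^ 2 + 4 * lam * θ ^ 2 * (lam + 1) * μ / c) - lam - 2))
    (hξpos : 0 < ξ) :
    HasDerivAt
      (fun x : ℝ => Real.log ((θ ^ 2 * x * lam + θ ^ 2 * x + 1) / (θ ^ 2 * x + 1)))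
      (c / μ) ξ := by
  set a := θ ^ 2 with ha
  have ha0 : 0 < a := by positivity
  have hc0 : 0 < c := by rw [hc]; positivity
  set D := lam ^ 2 + 4 * lam * θ ^ 2 * (lam + 1) * μ / c with hD
  have hD0 : 0 ≤ D := by rw [hD]; positivity
  set s := Real.sqrt D with hs
  have hs2 : s ^ 2 = D := Real.sq_sqrt hD0
  have hmax : (0:ℝ) < s - lam - 2 := by
    by_contra h
    push_neg at h
    rw [hξdef, max_eq_left h, mul_zero] at hξpos
    exact lt_irrefl 0 hξpos
  have hξ : ξ = (s - lam - 2) / (2 * a * (lam + 1)) := by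
    rw [hξdef, max_eq_right hmax.le]
    field_simp
  have hNe : a * (lam + 1) * ξ + 1 = (s - lam) / 2 := by
    rw [hξ]; field_simp; ring
  have hMe : a * ξ + 1 = (s + lam) / (2 * (lam + 1)) := by
    rw [hξ]; field_simp; ring
  have hNpos : 0 < a * (lam + 1) * ξ + 1 := by positivity
  have hMpos : 0 < a * ξ + 1 := by positivity
  have hNM : (a * (lam + 1) * ξ + 1) * (a * ξ + 1) = a * lam * μ / c := by
    rw [hNe, hMe]
    have h1 : (s - lam) / 2 * ((s + lam) / (2 * (lam + 1))) =
        (s ^ 2 - lam ^ 2) / (4 * (lam + 1)) := by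
      field_simp; ring
    rw [h1, hs2, hD, ha]
    field_simp
    ring
  have hd1 : HasDerivAt (fun x : ℝ => a * (lam + 1) * x + 1) (a * (lam + 1)) ξ := by
    simpa using ((hasDerivAt_id ξ).const_mul (a * (lam + 1))).add_const 1
  have hd2 : HasDerivAt (fun x : ℝ => a * x + 1) a ξ := by
    simpa using ((hasDerivAt_id ξ).const_mul a).add_const 1
  have hg : HasDerivAt
      (fun x : ℝ => Real.log (a * (lam + 1) * x + 1) - Real.log (a * x + 1))
      (a * (lam + 1) / (a * (lam + 1) * ξ + 1) - a / (a * ξ + 1)) ξ :=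
    (hd1.log hNpos.ne').sub (hd2.log hMpos.ne')
  have hval : a * (lam + 1) / (a * (lam + 1) * ξ + 1) - a / (a * ξ + 1) = c / μ := by
    rw [div_sub_div _ _ hNpos.ne' hMpos.ne', hNM,
      div_eq_div_iff (by positivity) hμ.ne']
    have h2 : c * (a * lam * μ / c) = a * lam * μ := by
      field_simp
    rw [h2]
    ring
  have heq : (fun x : ℝ => Real.log ((θ ^ 2 * x * lam + θ ^ 2 * x + 1) / (θ ^ 2 * x + 1)))
      =ᶠ[nhds ξ] (fun x : ℝ => Real.log (a * (lam + 1) * x + 1) - Real.log (a * x + 1)) := by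
    filter_upwards [eventually_gt_nhds hξpos] with x hx
    have h1 : 0 < θ ^ 2 * x * lam + θ ^ 2 * x + 1 := by positivity
    have h2 : 0 < θ ^ 2 * x + 1 := by positivity
    rw [Real.log_div h1.ne' h2.ne']
    have e1 : θ ^ 2 * x * lam + θ ^ 2 * x + 1 = a * (lam + 1) * x + 1 := by rw [ha]; ring
    rw [e1, ha]
  exact (hval ▸ hg).congr_of_eventuallyEq heq
end
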